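/- For every positive integer n and every subset R ⊆ {1,…,n} of even cardinality, the reflection σ_R maps the polytope Π ⊆ ℝⁿ onto itself, i.e. σ_R(Π) = Π. -/

import Mathlib

open Finset

/-- Indicator vector of a subset `I ⊆ {1,…,n}` in `ℝⁿ`. -/
def xi {n : ℕ} (I : Finset (Fin n)) : Fin n → ℝ := fun i => if i ∈ I then 1 else 0

/-- The affine function `H_I(x) = ∑_{j∉I} x_j + ∑_{i∈I} (1 − x_i)`. -/
def Hfun {n : ℕ} (I : Finset (Fin n)) (x : Fin n → ℝ) : ℝ :=
  ∑ j ∈ Iᶜ, x j + ∑ i ∈ I, (1 - x i)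

/-- The demi-hypercube: convex hull of the even vertices of `[0,1]ⁿ`. -/
def DemiCube (n : ℕ) : Set (Fin n → ℝ) :=
  convexHull ℝ {x : Fin n → ℝ | ∃ I : Finset (Fin n), Even I.card ∧ x = xi I}

/-- The polytope `Π = Δ ∩ (H_I ≥ 2 for all even I)`. -/
def PiPoly (n : ℕ) : Set (Fin n → ℝ) :=
  DemiCube n ∩ {x : Fin n → ℝ | ∀ I : Finset (Fin n), Even I.card → 2 ≤ Hfun I x}

/-- The reflection `σ_R` replacing `x_i` by `1 − x_i` for `i ∈ R`. -/
def sigmaRefl {n : ℕ} (R : Finset (Fin n)) (x : Fin n → ℝ) : Fin n → ℝ :=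
  fun i => if i ∈ R then 1 - x i else x i

-- auxiliary

lemma sigma_invol {n : ℕ} (R : Finset (Fin n)) (x : Fin n → ℝ) :
    sigmaRefl R (sigmaRefl R x) = x := by
  funext i; by_cases h : i ∈ R <;> simp [sigmaRefl, h]

/-- σ_R as an affine map. -/
noncomputable def sigmaAff {n : ℕ} (R : Finset (Fin n)) : (Fin n → ℝ) →ᵃ[ℝ] (Fin n → ℝ) where
  toFun := sigmaRefl R
  linear := LinearMap.pi fun i =>
    if i ∈ R then -(LinearMap.proj i) else (LinearMap.proj i : (Fin n → ℝ) →ₗ[ℝ] ℝ)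
  map_vadd' p v := by
    funext i
    by_cases h : i ∈ R <;>
      simp [sigmaRefl, h, LinearMap.pi_apply] <;> ring

lemma card_symmDiff_even {n : ℕ} {I R : Finset (Fin n)} (hI : Even I.card)
    (hR : Even R.card) : Even ((symmDiff I R).card) := by
  have h1 : (symmDiff I R).card = (I \ R).card + (R \ I).card := by
    rw [symmDiff_def]
    exact Finset.card_union_of_disjoint disjoint_sdiff_sdiff
  have h2 := Finset.card_sdiff_add_card_inter I R
  have h3 := Finset.card_sdiff_add_card_inter R I
  rw [Finset.inter_comm] at h3
  rw [Nat.even_iff] at hI hR ⊢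
  omega

lemma sigma_xi {n : ℕ} (R I : Finset (Fin n)) :
    sigmaRefl R (xi I) = xi (symmDiff I R) := by
  funext i
  by_cases hR : i ∈ R <;> by_cases hI : i ∈ I <;>
    simp [sigmaRefl, xi, hR, hI, Finset.mem_symmDiff]

lemma Hfun_eq {n : ℕ} (I : Finset (Fin n)) (x : Fin n → ℝ) :
    Hfun I x = ∑ j, (if j ∈ I then 1 - x j else x j) := by
  rw [Hfun, Finset.sum_ite, add_comm]
  congr 1
  · congr 1; ext j; simp
  · congr 1; ext j; simp

lemma Hfun_sigma {n : ℕ} (R I : Finset (Fin n)) (x : Fin n → ℝ) :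
    Hfun I (sigmaRefl R x) = Hfun (symmDiff I R) x := by
  rw [Hfun_eq, Hfun_eq]
  refine Finset.sum_congr rfl fun j _ => ?_
  by_cases hR : j ∈ R <;> by_cases hI : j ∈ I <;>
    simp [sigmaRefl, hR, hI, Finset.mem_symmDiff] <;> ring

lemma sigma_mapsTo {n : ℕ} (R : Finset (Fin n)) (hR : Even R.card) :
    Set.MapsTo (sigmaRefl R) (PiPoly n) (PiPoly n) := by
  rintro x ⟨hx1, hx2⟩
  constructor
  · -- demicube
    have : sigmaRefl R x ∈ sigmaAff R '' DemiCube n := ⟨x, hx1, rfl⟩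
    rw [DemiCube, AffineMap.image_convexHull] at this
    refine convexHull_mono ?_ this
    rintro y ⟨z, ⟨I, hIe, rfl⟩, rfl⟩
    exact ⟨symmDiff I R, card_symmDiff_even hIe hR,
      by rw [show (sigmaAff R) (xi I) = sigmaRefl R (xi I) from rfl, sigma_xi]⟩
  · intro I hIe
    rw [Hfun_sigma]
    exact hx2 _ (card_symmDiff_even hIe hR)

theorem stmt_7 (n : ℕ) (hn : 0 < n) (R : Finset (Fin n)) (hR : Even R.card) :
    sigmaRefl R '' PiPoly n = PiPoly n := by
  apply Set.Subset.antisymm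
  · exact Set.mapsTo_iff_image_subset.mp (sigma_mapsTo R hR)
  · intro x hx
    exact ⟨sigmaRefl R x, sigma_mapsTo R hR hx, sigma_invol R x⟩
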